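/- Let ρ ≤ 1/(8 l_{g,1}), σ l_{f,1} ≤ l_{g,1}, and define the Moreau-type envelope h*_{σ,ρ}(x,y) := min_{w∈Y} [ h_σ(x,w) + (1/(2ρ))‖w − y‖² ]. Then h*_{σ,ρ} is continuously differentiable jointly in (x,y) on X×ℝ^{d_y}, with ∇_x h*_{σ,ρ}(x,y) = ∇_x h_σ(x, w*) and ∇_y h*_{σ,ρ}(x,y) = ρ^{-1}(y − w*), where w* = prox_{ρ h_σ(x,·)}(y); moreover its gradient is Lipschitz continuous with constant 2/ρ (jointly in (x,y)). -/

import Mathlib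

open Set Metric InnerProductSpace

noncomputable section

lemma auxToDual' {F : Type*} [NormedAddCommGroup F] [InnerProductSpace ℝ F] [CompleteSpace F]
    (a : F) : (toDual ℝ F a : F →L[ℝ] ℝ) = innerSL ℝ a := by
  ext y; simp [toDual_apply_apply]

lemma auxGradIff {F : Type*} [NormedAddCommGroup F] [InnerProductSpace ℝ F] [CompleteSpace F]
    {f : F → ℝ} {a x : F} : HasGradientAt f a x ↔ HasFDerivAt f (innerSL ℝ a) x := by
  rw [hasGradientAt_iff_hasFDerivAt, auxToDual']

lemma auxQuad {F : Type*} [NormedAddCommGroup F] [InnerProductSpace ℝ F]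
    (y0 z : F) : HasFDerivAt (fun z' => ‖z' - y0‖^2) (innerSL ℝ ((2:ℝ) • (z - y0))) z := by
  have h1 : HasFDerivAt (fun z' : F => z' - y0) (ContinuousLinearMap.id ℝ F) z :=
    (hasFDerivAt_id z).sub_const y0
  have h2 := h1.inner ℝ h1
  have h3 : (fun z' : F => (inner ℝ (z' - y0) (z' - y0) : ℝ)) = fun z' => ‖z' - y0‖^2 := by
    funext z'; rw [real_inner_self_eq_norm_sq]
  rw [h3] at h2
  refine h2.congr_fderiv (Eq.symm ?_)
  ext v
  simp only [ContinuousLinearMap.coe_comp', Function.comp_apply, ContinuousLinearMap.prod_apply,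
    ContinuousLinearMap.coe_id', id_eq, fderivInnerCLM_apply, innerSL_apply_apply,
    real_inner_smul_left]
  rw [real_inner_comm (z - y0) v]
  ring

lemma auxSlope (φ : ℝ → ℝ) (φ' : ℝ) (hφ : HasDerivAt φ φ' 0)
    (hmin : ∀ t ∈ Set.Icc (0:ℝ) 1, φ 0 ≤ φ t) : 0 ≤ φ' := by
  have h := hasDerivAt_iff_tendsto_slope.1 hφ
  have h2 : Filter.Tendsto (slope φ 0) (nhdsWithin 0 (Set.Ioi (0:ℝ))) (nhds φ') :=
    h.mono_left (nhdsWithin_mono 0 (fun t ht => ne_of_gt ht))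
  refine ge_of_tendsto h2 ?_
  filter_upwards [Ioc_mem_nhdsGT_of_mem (Set.left_mem_Ico.2 one_pos)] with t ht
  rw [slope_def_field]
  exact div_nonneg (by linarith [hmin t ⟨le_of_lt ht.1, ht.2⟩]) (by linarith [ht.1])

lemma auxStrongMin {F : Type*} [NormedAddCommGroup F] [InnerProductSpace ℝ F] [CompleteSpace F]
    (Y : Set F) (hYconv : Convex ℝ Y) (ψ : F → ℝ) (ψ' : F → F) (μ : ℝ)
    (hψ : ∀ w, HasGradientAt ψ (ψ' w) w)
    (hmono : ∀ u v, μ * ‖u - v‖^2 ≤ (inner ℝ (ψ' u - ψ' v) (u - v) : ℝ))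
    (w0 : F) (hw0 : w0 ∈ Y) (hmin : ∀ w ∈ Y, ψ w0 ≤ ψ w)
    (w : F) (hw : w ∈ Y) : ψ w0 + μ/2 * ‖w - w0‖^2 ≤ ψ w := by
  set d := w - w0 with hd
  have hline : ∀ t : ℝ, HasDerivAt (fun t : ℝ => w0 + t • d) d t := by
    intro t
    simpa using ((hasDerivAt_id t).smul_const d).const_add w0
  have hφ : ∀ t : ℝ, HasDerivAt (fun t : ℝ => ψ (w0 + t • d))
      ((inner ℝ (ψ' (w0 + t • d)) d : ℝ)) t := by
    intro t
    have := ((auxGradIff.1 (hψ (w0 + t • d))).comp_hasDerivAt t (hline t))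
    exact this
  have hmem : ∀ t : ℝ, t ∈ Set.Icc (0:ℝ) 1 → w0 + t • d ∈ Y := by
    intro t ht
    have : w0 + t • d = (1 - t) • w0 + t • w := by
      rw [hd]; module
    rw [this]
    exact hYconv hw0 hw (by linarith [ht.1, ht.2]) ht.1 (by ring)
  have hfo : 0 ≤ (inner ℝ (ψ' w0) d : ℝ) := by
    refine auxSlope _ _ (by simpa using hφ 0) ?_
    intro t ht
    simpa using hmin _ (hmem t ht)
  set c : ℝ := (inner ℝ (ψ' w0) d : ℝ) with hc
  set χ : ℝ → ℝ := fun t => ψ (w0 + t • d) - c * t - μ/2 * t^2 * ‖d‖^2 with hχ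
  have hχd : ∀ t : ℝ, HasDerivAt χ
      ((inner ℝ (ψ' (w0 + t • d)) d : ℝ) - c - μ * t * ‖d‖^2) t := by
    intro t
    have h1 := (hφ t).sub ((hasDerivAt_id t).const_mul c)
    have h2 : HasDerivAt (fun t : ℝ => μ/2 * t^2 * ‖d‖^2) (μ * t * ‖d‖^2) t := by
      have := ((hasDerivAt_pow 2 t).const_mul (μ/2)).mul_const (‖d‖^2)
      exact this.congr_deriv (by ring)
    have h12 := h1.sub h2
    have he : χ = fun x => ψ (w0 + x • d) - c * id x - μ / 2 * x ^ 2 * ‖d‖ ^ 2 := by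
      funext x; simp only [hχ, id]
    rw [he]
    exact h12.congr_deriv (by ring)
  have hχmono : MonotoneOn χ (Set.Icc (0:ℝ) 1) := by
    apply monotoneOn_of_deriv_nonneg (convex_Icc 0 1)
    · exact fun t _ => ((hχd t).continuousAt).continuousWithinAt
    · exact fun t _ => ((hχd t).differentiableAt).differentiableWithinAt
    · intro t ht
      rw [interior_Icc] at ht
      rw [(hχd t).deriv]
      have key : μ * t * ‖d‖^2 ≤ (inner ℝ (ψ' (w0 + t • d) - ψ' w0) d : ℝ) := by
        have h3 := hmono (w0 + t • d) w0
        have h4 : w0 + t • d - w0 = t • d := by abel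
        rw [h4, norm_smul, inner_smul_right] at h3
        have ht0 : 0 < t := ht.1
        have h5 : μ * (‖t‖ * ‖d‖)^2 = t * (μ * t * ‖d‖^2) := by
          rw [Real.norm_eq_abs, abs_of_pos ht0]; ring
        rw [h5] at h3
        exact le_of_mul_le_mul_left h3 ht0
      rw [inner_sub_left] at key
      linarith
  have h01 := hχmono (Set.left_mem_Icc.2 zero_le_one) (Set.right_mem_Icc.2 zero_le_one) zero_le_one
  simp only [hχ] at h01
  have he : w0 + (1:ℝ) • d = w := by rw [hd]; module
  have he0 : w0 + (0:ℝ) • d = w0 := by simp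
  rw [he, he0] at h01
  simp only [one_pow, mul_one] at h01
  have : ψ w0 + c + μ/2 * ‖d‖^2 ≤ ψ w := by linarith
  linarith

lemma auxNormSum {E F : Type*} [NormedAddCommGroup E] [InnerProductSpace ℝ E]
    [NormedAddCommGroup F] [InnerProductSpace ℝ F] (a : E) (b : F) :
    ‖(innerSL ℝ a).comp (ContinuousLinearMap.fst ℝ E F)
      + (innerSL ℝ b).comp (ContinuousLinearMap.snd ℝ E F)‖ ≤ ‖a‖ + ‖b‖ := by
  refine ContinuousLinearMap.opNorm_le_bound _ (by positivity) ?_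
  rintro ⟨u, v⟩
  simp only [ContinuousLinearMap.add_apply, ContinuousLinearMap.coe_comp', Function.comp_apply,
    ContinuousLinearMap.coe_fst', ContinuousLinearMap.coe_snd', innerSL_apply_apply]
  calc ‖(inner ℝ a u : ℝ) + inner ℝ b v‖ ≤ ‖(inner ℝ a u : ℝ)‖ + ‖(inner ℝ b v : ℝ)‖ := norm_add_le _ _
    _ ≤ ‖a‖ * ‖u‖ + ‖b‖ * ‖v‖ := by
        gcongr
        · exact norm_inner_le_norm a u
        · exact norm_inner_le_norm b v
    _ ≤ ‖a‖ * ‖(u, v)‖ + ‖b‖ * ‖(u, v)‖ := by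
        gcongr
        · exact norm_fst_le (u, v)
        · exact norm_snd_le (u, v)
    _ = (‖a‖ + ‖b‖) * ‖(u, v)‖ := by ring

lemma auxDiffSum {E F : Type*} [NormedAddCommGroup E] [InnerProductSpace ℝ E]
    [NormedAddCommGroup F] [InnerProductSpace ℝ F] (a₁ a₂ : E) (b₁ b₂ : F) :
    ((innerSL ℝ a₁).comp (ContinuousLinearMap.fst ℝ E F)
      + (innerSL ℝ b₁).comp (ContinuousLinearMap.snd ℝ E F))
    - ((innerSL ℝ a₂).comp (ContinuousLinearMap.fst ℝ E F)
      + (innerSL ℝ b₂).comp (ContinuousLinearMap.snd ℝ E F))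
    = (innerSL ℝ (a₁ - a₂)).comp (ContinuousLinearMap.fst ℝ E F)
      + (innerSL ℝ (b₁ - b₂)).comp (ContinuousLinearMap.snd ℝ E F) := by
  apply ContinuousLinearMap.ext
  rintro ⟨u, v⟩
  simp [inner_sub_left]
  ring

lemma auxInnerSLdiff {F : Type*} [NormedAddCommGroup F] [InnerProductSpace ℝ F]
    (a b : F) : ‖innerSL ℝ a - innerSL ℝ b‖ = ‖a - b‖ := by
  rw [← map_sub, innerSL_apply_norm]

lemma auxCompInl {E F G : Type*} [NormedAddCommGroup E] [NormedAddCommGroup F]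
    [NormedAddCommGroup G] [NormedSpace ℝ E] [NormedSpace ℝ F] [NormedSpace ℝ G]
    (A : E × F →L[ℝ] G) : ‖A.comp (ContinuousLinearMap.inl ℝ E F)‖ ≤ ‖A‖ := by
  refine ContinuousLinearMap.opNorm_le_bound _ (norm_nonneg A) ?_
  intro u
  calc ‖A (u, 0)‖ ≤ ‖A‖ * ‖((u, 0) : E × F)‖ := A.le_opNorm _
    _ = ‖A‖ * ‖u‖ := by rw [Prod.norm_def]; simp

lemma auxCompInr {E F G : Type*} [NormedAddCommGroup E] [NormedAddCommGroup F]
    [NormedAddCommGroup G] [NormedSpace ℝ E] [NormedSpace ℝ F] [NormedSpace ℝ G]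
    (A : E × F →L[ℝ] G) : ‖A.comp (ContinuousLinearMap.inr ℝ E F)‖ ≤ ‖A‖ := by
  refine ContinuousLinearMap.opNorm_le_bound _ (norm_nonneg A) ?_
  intro v
  calc ‖A (0, v)‖ ≤ ‖A‖ * ‖((0, v) : E × F)‖ := A.le_opNorm _
    _ = ‖A‖ * ‖v‖ := by rw [Prod.norm_def]; simp

lemma auxInlProd {E F : Type*} [NormedAddCommGroup E] [NormedAddCommGroup F]
    [NormedSpace ℝ E] [NormedSpace ℝ F] :
    (ContinuousLinearMap.id ℝ E).prod (0 : E →L[ℝ] F) = ContinuousLinearMap.inl ℝ E F := by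
  ext u <;> simp

lemma auxInrProd {E F : Type*} [NormedAddCommGroup E] [NormedAddCommGroup F]
    [NormedSpace ℝ E] [NormedSpace ℝ F] :
    ((0 : F →L[ℝ] E)).prod (ContinuousLinearMap.id ℝ F) = ContinuousLinearMap.inr ℝ E F := by
  ext v <;> simp

end




open Set Metric

set_option maxHeartbeats 4000000 in
/-- For `ρ ≤ 1/(8 l_{g,1})` and `σ l_{f,1} ≤ l_{g,1}`, the Moreau-type
envelope `h*_{σ,ρ}(x,y) = min_{w ∈ Y}[h_σ(x,w) + ‖w−y‖²/(2ρ)]` is continuously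
differentiable jointly in `(x,y)` on `X × ℝ^{d_y}`, with
`∇_x h*_{σ,ρ}(x,y) = ∇_x h_σ(x,w*)` and `∇_y h*_{σ,ρ}(x,y) = ρ⁻¹(y − w*)` where
`w* = prox_{ρ h_σ(x,·)}(y)`; its gradient is `2/ρ`-Lipschitz jointly in `(x,y)`. -/
theorem stmt12
    (dx dy : ℕ)
    (X : Set (EuclideanSpace ℝ (Fin dx)))
    (Y : Set (EuclideanSpace ℝ (Fin dy)))
    (hXne : X.Nonempty) (hXclosed : IsClosed X) (hXconv : Convex ℝ X)
    (hYne : Y.Nonempty) (hYclosed : IsClosed Y) (hYconv : Convex ℝ Y)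
    (hYbdd : Bornology.IsBounded Y)
    (f g : EuclideanSpace ℝ (Fin dx) → EuclideanSpace ℝ (Fin dy) → ℝ)
    (lf1 lg1 σ ρ : ℝ)
    (hfC2 : ContDiff ℝ 2 (Function.uncurry f))
    (hgC2 : ContDiff ℝ 2 (Function.uncurry g))
    (hLipf : ∀ p q : EuclideanSpace ℝ (Fin dx) × EuclideanSpace ℝ (Fin dy),
      ‖fderiv ℝ (Function.uncurry f) p - fderiv ℝ (Function.uncurry f) q‖ ≤ lf1 * ‖p - q‖)
    (hLipg : ∀ p q : EuclideanSpace ℝ (Fin dx) × EuclideanSpace ℝ (Fin dy),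
      ‖fderiv ℝ (Function.uncurry g) p - fderiv ℝ (Function.uncurry g) q‖ ≤ lg1 * ‖p - q‖)
    (hρpos : 0 < ρ) (hρ : ρ ≤ 1 / (8 * lg1))
    (hσ : 0 ≤ σ) (hσl : σ * lf1 ≤ lg1)
    -- `prox x y` is the unique minimizer over `w ∈ Y` of `ρ h_σ(x,w) + ‖w − y‖²/2`
    (prox : EuclideanSpace ℝ (Fin dx) → EuclideanSpace ℝ (Fin dy) → EuclideanSpace ℝ (Fin dy))
    (hprox : ∀ x y, prox x y ∈ Y ∧ ∀ w ∈ Y,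
      ρ * (σ * f x (prox x y) + g x (prox x y)) + ‖prox x y - y‖ ^ 2 / 2
        ≤ ρ * (σ * f x w + g x w) + ‖w - y‖ ^ 2 / 2)
    -- the Moreau-type envelope `h*_{σ,ρ}`
    (env : EuclideanSpace ℝ (Fin dx) → EuclideanSpace ℝ (Fin dy) → ℝ)
    (henv : ∀ x y, env x y
      = sInf ((fun w => σ * f x w + g x w + ‖w - y‖ ^ 2 / (2 * ρ)) '' Y)) :
    ∃ D : EuclideanSpace ℝ (Fin dx) → EuclideanSpace ℝ (Fin dy) →
        (EuclideanSpace ℝ (Fin dx) × EuclideanSpace ℝ (Fin dy) →L[ℝ] ℝ),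
      (∀ x ∈ X, ∀ y : EuclideanSpace ℝ (Fin dy),
        HasFDerivAt (Function.uncurry env) (D x y) (x, y) ∧
        D x y = (innerSL ℝ (gradient (fun x' => σ * f x' (prox x y) + g x' (prox x y)) x)).comp
            (ContinuousLinearMap.fst ℝ (EuclideanSpace ℝ (Fin dx)) (EuclideanSpace ℝ (Fin dy)))
          + (innerSL ℝ (ρ⁻¹ • (y - prox x y))).comp
            (ContinuousLinearMap.snd ℝ (EuclideanSpace ℝ (Fin dx)) (EuclideanSpace ℝ (Fin dy)))) ∧
      (∀ x₁ ∈ X, ∀ x₂ ∈ X, ∀ y₁ y₂ : EuclideanSpace ℝ (Fin dy),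
        ‖D x₁ y₁ - D x₂ y₂‖
          ≤ (2 / ρ) * ‖((x₁, y₁) : EuclideanSpace ℝ (Fin dx) × EuclideanSpace ℝ (Fin dy))
              - (x₂, y₂)‖) := by
  -- step 1 : lg1 > 0
  have hlg : 0 < lg1 := by
    by_contra hc
    push_neg at hc
    have h8 : 8 * lg1 ≤ 0 := by linarith
    have : 1 / (8 * lg1) ≤ 0 := div_nonpos_of_nonneg_of_nonpos zero_le_one h8
    linarith
  -- step 2 : differentiability
  have hdf : Differentiable ℝ (Function.uncurry f) := hfC2.differentiable (by norm_num)
  have hdg : Differentiable ℝ (Function.uncurry g) := hgC2.differentiable (by norm_num)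
  set H : EuclideanSpace ℝ (Fin dx) × EuclideanSpace ℝ (Fin dy) → ℝ :=
    fun p => σ * Function.uncurry f p + Function.uncurry g p with hHdef
  have hdH : Differentiable ℝ H := (hdf.const_mul σ).add hdg
  -- step 4 : Lipschitz fderiv of H
  set Lp : ℝ := max (σ * lf1 + lg1) 0 with hLpdef
  have hLp0 : 0 ≤ Lp := le_max_right _ _
  have hfdH : ∀ p, fderiv ℝ H p
      = σ • fderiv ℝ (Function.uncurry f) p + fderiv ℝ (Function.uncurry g) p := by
    intro p
    rw [hHdef]
    rw [fderiv_fun_add ((hdf p).const_mul σ) (hdg p), fderiv_const_mul (hdf p) σ]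
  have hLipH : ∀ p q, ‖fderiv ℝ H p - fderiv ℝ H q‖ ≤ Lp * ‖p - q‖ := by
    intro p q
    rw [hfdH p, hfdH q]
    have he : σ • fderiv ℝ (Function.uncurry f) p + fderiv ℝ (Function.uncurry g) p
        - (σ • fderiv ℝ (Function.uncurry f) q + fderiv ℝ (Function.uncurry g) q)
        = σ • (fderiv ℝ (Function.uncurry f) p - fderiv ℝ (Function.uncurry f) q)
          + (fderiv ℝ (Function.uncurry g) p - fderiv ℝ (Function.uncurry g) q) := by
      rw [smul_sub]; abel
    rw [he]
    calc ‖σ • (fderiv ℝ (Function.uncurry f) p - fderiv ℝ (Function.uncurry f) q)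
          + (fderiv ℝ (Function.uncurry g) p - fderiv ℝ (Function.uncurry g) q)‖
        ≤ ‖σ • (fderiv ℝ (Function.uncurry f) p - fderiv ℝ (Function.uncurry f) q)‖
          + ‖fderiv ℝ (Function.uncurry g) p - fderiv ℝ (Function.uncurry g) q‖ :=
          norm_add_le _ _
      _ ≤ σ * (lf1 * ‖p - q‖) + lg1 * ‖p - q‖ := by
          refine add_le_add ?_ (hLipg p q)
          rw [norm_smul, Real.norm_eq_abs, abs_of_nonneg hσ]
          exact mul_le_mul_of_nonneg_left (hLipf p q) hσ
      _ = (σ * lf1 + lg1) * ‖p - q‖ := by ring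
      _ ≤ Lp * ‖p - q‖ := mul_le_mul_of_nonneg_right (le_max_left _ _) (norm_nonneg _)
  -- step 5
  have hρLp : ρ * Lp ≤ 1/4 := by
    have h1 : Lp ≤ 2 * lg1 := by
      apply max_le <;> nlinarith
    have h2 : ρ * (8 * lg1) ≤ 1 := (le_div_iff₀ (by positivity : (0:ℝ) < 8 * lg1)).1 hρ
    nlinarith
  have hμ0 : (3:ℝ)/4 ≤ 1 - ρ * Lp := by linarith
  -- step 7 : partial gradients
  set Gx : EuclideanSpace ℝ (Fin dx) → EuclideanSpace ℝ (Fin dy) → EuclideanSpace ℝ (Fin dx) :=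
    fun x w => gradient (fun x' => σ * f x' w + g x' w) x with hGxdef
  set Gy : EuclideanSpace ℝ (Fin dx) → EuclideanSpace ℝ (Fin dy) → EuclideanSpace ℝ (Fin dy) :=
    fun x w => gradient (fun w' => σ * f x w' + g x w') w with hGydef
  have hsecx : ∀ (x : EuclideanSpace ℝ (Fin dx)) (w : EuclideanSpace ℝ (Fin dy)),
      HasFDerivAt (fun x' => σ * f x' w + g x' w)
        ((fderiv ℝ H (x, w)).comp (ContinuousLinearMap.inl ℝ _ _)) x := by
    intro x w
    have hft : HasFDerivAt (fun x' : EuclideanSpace ℝ (Fin dx) => (x', w))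
        (ContinuousLinearMap.inl ℝ _ _) x := by
      rw [← auxInlProd]
      exact (hasFDerivAt_id x).prodMk (hasFDerivAt_const w x)
    exact (hdH (x, w)).hasFDerivAt.comp x hft
  have hsecy : ∀ (x : EuclideanSpace ℝ (Fin dx)) (w : EuclideanSpace ℝ (Fin dy)),
      HasFDerivAt (fun w' => σ * f x w' + g x w')
        ((fderiv ℝ H (x, w)).comp (ContinuousLinearMap.inr ℝ _ _)) w := by
    intro x w
    have hft : HasFDerivAt (fun w' : EuclideanSpace ℝ (Fin dy) => (x, w'))
        (ContinuousLinearMap.inr ℝ _ _) w := by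
      rw [← auxInrProd]
      exact (hasFDerivAt_const x w).prodMk (hasFDerivAt_id w)
    exact (hdH (x, w)).hasFDerivAt.comp w hft
  have hGx : ∀ x w, HasFDerivAt (fun x' => σ * f x' w + g x' w) (innerSL ℝ (Gx x w)) x := by
    intro x w
    exact auxGradIff.1 (hsecx x w).differentiableAt.hasGradientAt
  have hGy : ∀ x w, HasFDerivAt (fun w' => σ * f x w' + g x w') (innerSL ℝ (Gy x w)) w := by
    intro x w
    exact auxGradIff.1 (hsecy x w).differentiableAt.hasGradientAt
  have hGxLip : ∀ x₁ w₁ x₂ w₂, ‖Gx x₁ w₁ - Gx x₂ w₂‖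
      ≤ Lp * ‖((x₁, w₁) : EuclideanSpace ℝ (Fin dx) × EuclideanSpace ℝ (Fin dy)) - (x₂, w₂)‖ := by
    intro x₁ w₁ x₂ w₂
    rw [← auxInnerSLdiff]
    rw [(hGx x₁ w₁).unique (hsecx x₁ w₁), (hGx x₂ w₂).unique (hsecx x₂ w₂)]
    rw [← ContinuousLinearMap.sub_comp]
    calc ‖(fderiv ℝ H (x₁, w₁) - fderiv ℝ H (x₂, w₂)).comp (ContinuousLinearMap.inl ℝ _ _)‖
        ≤ ‖fderiv ℝ H (x₁, w₁) - fderiv ℝ H (x₂, w₂)‖ := auxCompInl _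
      _ ≤ Lp * ‖((x₁, w₁) : _ × _) - (x₂, w₂)‖ := hLipH _ _
  have hGyLip : ∀ x₁ w₁ x₂ w₂, ‖Gy x₁ w₁ - Gy x₂ w₂‖
      ≤ Lp * ‖((x₁, w₁) : EuclideanSpace ℝ (Fin dx) × EuclideanSpace ℝ (Fin dy)) - (x₂, w₂)‖ := by
    intro x₁ w₁ x₂ w₂
    rw [← auxInnerSLdiff]
    rw [(hGy x₁ w₁).unique (hsecy x₁ w₁), (hGy x₂ w₂).unique (hsecy x₂ w₂)]
    rw [← ContinuousLinearMap.sub_comp]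
    calc ‖(fderiv ℝ H (x₁, w₁) - fderiv ℝ H (x₂, w₂)).comp (ContinuousLinearMap.inr ℝ _ _)‖
        ≤ ‖fderiv ℝ H (x₁, w₁) - fderiv ℝ H (x₂, w₂)‖ := auxCompInr _
      _ ≤ Lp * ‖((x₁, w₁) : _ × _) - (x₂, w₂)‖ := hLipH _ _
  -- norms of pairs with one zero component
  have hpairx : ∀ (x₁ x₂ : EuclideanSpace ℝ (Fin dx)) (w : EuclideanSpace ℝ (Fin dy)),
      ‖((x₁, w) : _ × _) - (x₂, w)‖ = ‖x₁ - x₂‖ := by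
    intro x₁ x₂ w
    rw [Prod.mk_sub_mk, Prod.norm_def]
    simp
  have hpairy : ∀ (x : EuclideanSpace ℝ (Fin dx)) (w₁ w₂ : EuclideanSpace ℝ (Fin dy)),
      ‖((x, w₁) : _ × _) - (x, w₂)‖ = ‖w₁ - w₂‖ := by
    intro x w₁ w₂
    rw [Prod.mk_sub_mk, Prod.norm_def]
    simp
  -- step 8 : scalar mean value in w
  have hMVx : ∀ (x₁ x₂ : EuclideanSpace ℝ (Fin dx)) (w w' : EuclideanSpace ℝ (Fin dy)),
      ‖((σ * f x₁ w + g x₁ w) - (σ * f x₂ w + g x₂ w))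
        - ((σ * f x₁ w' + g x₁ w') - (σ * f x₂ w' + g x₂ w'))‖
      ≤ Lp * ‖x₁ - x₂‖ * ‖w - w'‖ := by
    intro x₁ x₂ w w'
    have hder : ∀ z : EuclideanSpace ℝ (Fin dy), HasFDerivWithinAt
        (fun w'' => (σ * f x₁ w'' + g x₁ w'') - (σ * f x₂ w'' + g x₂ w''))
        (innerSL ℝ (Gy x₁ z) - innerSL ℝ (Gy x₂ z)) univ z := by
      intro z
      exact (((hGy x₁ z).sub (hGy x₂ z))).hasFDerivWithinAt
    have hbound : ∀ z ∈ (univ : Set (EuclideanSpace ℝ (Fin dy))),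
        ‖innerSL ℝ (Gy x₁ z) - innerSL ℝ (Gy x₂ z)‖ ≤ Lp * ‖x₁ - x₂‖ := by
      intro z _
      rw [auxInnerSLdiff]
      have := hGyLip x₁ z x₂ z
      rwa [hpairx] at this
    exact convex_univ.norm_image_sub_le_of_norm_hasFDerivWithin_le
      (fun z _ => hder z) hbound (mem_univ w') (mem_univ w)
  -- step 9 : K and DK
  set K : EuclideanSpace ℝ (Fin dy) → (EuclideanSpace ℝ (Fin dx) × EuclideanSpace ℝ (Fin dy)) → ℝ :=
    fun w q => σ * f q.1 w + g q.1 w + ‖w - q.2‖ ^ 2 / (2 * ρ) with hKdef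
  set DK : EuclideanSpace ℝ (Fin dy) → (EuclideanSpace ℝ (Fin dx) × EuclideanSpace ℝ (Fin dy)) →
      (EuclideanSpace ℝ (Fin dx) × EuclideanSpace ℝ (Fin dy) →L[ℝ] ℝ) :=
    fun w p => (innerSL ℝ (Gx p.1 w)).comp (ContinuousLinearMap.fst ℝ _ _)
      + (innerSL ℝ (ρ⁻¹ • (p.2 - w))).comp (ContinuousLinearMap.snd ℝ _ _) with hDKdef
  have hK : ∀ w p, HasFDerivAt (K w) (DK w p) p := by
    intro w p
    have c1 : HasFDerivAt (fun q : EuclideanSpace ℝ (Fin dx) × EuclideanSpace ℝ (Fin dy) =>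
        σ * f q.1 w + g q.1 w)
        ((innerSL ℝ (Gx p.1 w)).comp (ContinuousLinearMap.fst ℝ _ _)) p :=
      (hGx p.1 w).comp p (hasFDerivAt_fst)
    have hsnd : HasFDerivAt (Prod.snd : EuclideanSpace ℝ (Fin dx) × EuclideanSpace ℝ (Fin dy) →
        EuclideanSpace ℝ (Fin dy)) (ContinuousLinearMap.snd ℝ _ _) p := hasFDerivAt_snd
    have c2base := ((auxQuad w p.2).const_mul ((2*ρ)⁻¹)).comp p hsnd
    have c2 : HasFDerivAt (fun q : EuclideanSpace ℝ (Fin dx) × EuclideanSpace ℝ (Fin dy) =>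
        ‖w - q.2‖ ^ 2 / (2 * ρ))
        ((innerSL ℝ (ρ⁻¹ • (p.2 - w))).comp (ContinuousLinearMap.snd ℝ _ _)) p := by
      have hfe : (fun q : EuclideanSpace ℝ (Fin dx) × EuclideanSpace ℝ (Fin dy) =>
          ‖w - q.2‖ ^ 2 / (2 * ρ))
          = fun q : EuclideanSpace ℝ (Fin dx) × EuclideanSpace ℝ (Fin dy) =>
            (2*ρ)⁻¹ * ‖q.2 - w‖ ^ 2 := by
        funext q
        rw [norm_sub_rev]
        ring
      rw [hfe]
      refine c2base.congr_fderiv (Eq.symm ?_)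
      apply ContinuousLinearMap.ext
      rintro ⟨v1, v2⟩
      simp only [ContinuousLinearMap.coe_comp', Function.comp_apply,
        ContinuousLinearMap.coe_snd', innerSL_apply_apply, ContinuousLinearMap.coe_smul',
        Pi.smul_apply, smul_eq_mul, real_inner_smul_left]
      have hρ' : ρ ≠ 0 := ne_of_gt hρpos
      field_simp
    exact c1.add c2
  have hDKLipw : ∀ w₁ w₂ p, ‖DK w₁ p - DK w₂ p‖ ≤ (Lp + ρ⁻¹) * ‖w₁ - w₂‖ := by
    intro w₁ w₂ p
    rw [hDKdef]
    simp only []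
    rw [auxDiffSum]
    refine le_trans (auxNormSum _ _) ?_
    have h1 : ‖Gx p.1 w₁ - Gx p.1 w₂‖ ≤ Lp * ‖w₁ - w₂‖ := by
      have := hGxLip p.1 w₁ p.1 w₂
      rwa [hpairy] at this
    have h2 : ‖ρ⁻¹ • (p.2 - w₁) - ρ⁻¹ • (p.2 - w₂)‖ = ρ⁻¹ * ‖w₁ - w₂‖ := by
      rw [← smul_sub]
      have he : p.2 - w₁ - (p.2 - w₂) = w₂ - w₁ := by abel
      rw [he, norm_smul, Real.norm_eq_abs, abs_of_nonneg (by positivity), norm_sub_rev]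
    rw [h2]
    linarith
  have hKMV : ∀ w₁ w₂ p q, ‖(K w₁ p - K w₂ p) - (K w₁ q - K w₂ q)‖
      ≤ ((Lp + ρ⁻¹) * ‖w₁ - w₂‖) * ‖p - q‖ := by
    intro w₁ w₂ p q
    exact convex_univ.norm_image_sub_le_of_norm_hasFDerivWithin_le
      (fun r _ => ((hK w₁ r).sub (hK w₂ r)).hasFDerivWithinAt)
      (fun r _ => hDKLipw w₁ w₂ r) (mem_univ q) (mem_univ p)
  -- step 10 : envelope identities
  have hdiv : ∀ a b s t : ℝ, ρ*a + s/2 ≤ ρ*b + t/2 → a + s/(2*ρ) ≤ b + t/(2*ρ) := by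
    intro a b s t h
    have hρ' : ρ ≠ 0 := ne_of_gt hρpos
    have e : ∀ u v : ℝ, (ρ*u + v/2)/ρ = u + v/(2*ρ) := by
      intro u v
      field_simp
    have h2 : (ρ*a + s/2)/ρ ≤ (ρ*b + t/2)/ρ := by gcongr
    rw [e a s, e b t] at h2
    exact h2
  have henvK : ∀ x y, env x y = K (prox x y) (x, y) := by
    intro x y
    rw [henv x y]
    apply IsLeast.csInf_eq
    constructor
    · exact ⟨prox x y, (hprox x y).1, rfl⟩
    · rintro v ⟨w, hw, rfl⟩
      exact hdiv _ _ _ _ ((hprox x y).2 w hw)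
  have henvle : ∀ x y w, w ∈ Y → env x y ≤ K w (x, y) := by
    intro x y w hw
    rw [henvK x y]
    exact hdiv _ _ _ _ ((hprox x y).2 w hw)
  have hρLp0 : 0 ≤ ρ * Lp := mul_nonneg hρpos.le hLp0
  -- step 11 : strong minimality of prox
  have hSM : ∀ x y w, w ∈ Y →
      ρ * (σ * f x (prox x y) + g x (prox x y)) + ‖prox x y - y‖^2/2
        + (1 - ρ*Lp)/2 * ‖w - prox x y‖^2
      ≤ ρ * (σ * f x w + g x w) + ‖w - y‖^2/2 := by
    intro x y w hw
    have hψ : ∀ z : EuclideanSpace ℝ (Fin dy),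
        HasGradientAt (fun w' => ρ * (σ * f x w' + g x w') + ‖w' - y‖^2/2)
          (ρ • Gy x z + (z - y)) z := by
      intro z
      apply auxGradIff.2
      have q1 : HasFDerivAt (fun w' => ρ * (σ * f x w' + g x w'))
          (ρ • innerSL ℝ (Gy x z)) z := (hGy x z).const_mul ρ
      have q2 : HasFDerivAt (fun w' : EuclideanSpace ℝ (Fin dy) => ‖w' - y‖^2/2)
          ((2:ℝ)⁻¹ • innerSL ℝ ((2:ℝ) • (z - y))) z := by
        have h0 := (auxQuad y z).const_mul ((2:ℝ)⁻¹)
        have hfe : (fun w' : EuclideanSpace ℝ (Fin dy) => ‖w' - y‖^2/2)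
            = fun w' => (2:ℝ)⁻¹ * ‖w' - y‖^2 := by
          funext w'; ring
        rw [hfe]; exact h0
      have q3 := q1.add q2
      have he : innerSL ℝ (ρ • Gy x z + (z - y))
          = ρ • innerSL ℝ (Gy x z) + (2:ℝ)⁻¹ • innerSL ℝ ((2:ℝ) • (z - y)) := by
        apply ContinuousLinearMap.ext
        intro v
        simp only [innerSL_apply_apply, inner_add_left, real_inner_smul_left,
          ContinuousLinearMap.add_apply, ContinuousLinearMap.coe_smul', Pi.smul_apply,
          smul_eq_mul]
        ring
      rw [he]
      exact q3
    have hmono : ∀ u v : EuclideanSpace ℝ (Fin dy), (1 - ρ*Lp) * ‖u - v‖^2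
        ≤ (inner ℝ ((ρ • Gy x u + (u - y)) - (ρ • Gy x v + (v - y))) (u - v) : ℝ) := by
      intro u v
      have he : (ρ • Gy x u + (u - y)) - (ρ • Gy x v + (v - y))
          = ρ • (Gy x u - Gy x v) + (u - v) := by
        rw [smul_sub]; abel
      rw [he, inner_add_left, real_inner_smul_left, real_inner_self_eq_norm_sq]
      have hGb : ‖Gy x u - Gy x v‖ ≤ Lp * ‖u - v‖ := by
        have := hGyLip x u x v
        rwa [hpairy] at this
      have hcs : -(‖Gy x u - Gy x v‖ * ‖u - v‖) ≤ (inner ℝ (Gy x u - Gy x v) (u - v) : ℝ) :=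
        neg_le_of_abs_le (abs_real_inner_le_norm _ _)
      have h1 : -(Lp * ‖u - v‖ * ‖u - v‖) ≤ (inner ℝ (Gy x u - Gy x v) (u - v) : ℝ) := by
        refine le_trans (neg_le_neg ?_) hcs
        exact mul_le_mul_of_nonneg_right hGb (norm_nonneg _)
      nlinarith [norm_nonneg (u - v), mul_le_mul_of_nonneg_left h1 hρpos.le]
    have := auxStrongMin Y hYconv _ _ (1 - ρ*Lp) hψ hmono (prox x y) (hprox x y).1
      (fun w' hw' => (hprox x y).2 w' hw') w hw
    linarith [this]
  -- step 12 : key inequality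
  have hkey : ∀ x₁ y₁ x₂ y₂, (1 - ρ*Lp) * ‖prox x₁ y₁ - prox x₂ y₂‖^2
      ≤ ρ*Lp*‖x₁-x₂‖*‖prox x₁ y₁ - prox x₂ y₂‖
        + (inner ℝ (prox x₁ y₁ - prox x₂ y₂) (y₁ - y₂) : ℝ) := by
    intro x₁ y₁ x₂ y₂
    set w₁ := prox x₁ y₁
    set w₂ := prox x₂ y₂
    have h1 := hSM x₁ y₁ w₂ (hprox x₂ y₂).1
    have h2 := hSM x₂ y₂ w₁ (hprox x₁ y₁).1
    have hq : ‖w₂-y₁‖^2 - ‖w₁-y₁‖^2 + ‖w₁-y₂‖^2 - ‖w₂-y₂‖^2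
        = 2 * (inner ℝ (w₁ - w₂) (y₁ - y₂) : ℝ) := by
      simp only [norm_sub_sq_real, inner_sub_left, inner_sub_right]
      ring
    have hrev : ‖w₂ - w₁‖ = ‖w₁ - w₂‖ := norm_sub_rev _ _
    have hmv := hMVx x₁ x₂ w₂ w₁
    rw [Real.norm_eq_abs] at hmv
    have hmv2 : (σ * f x₁ w₂ + g x₁ w₂) - (σ * f x₂ w₂ + g x₂ w₂)
        - ((σ * f x₁ w₁ + g x₁ w₁) - (σ * f x₂ w₁ + g x₂ w₁))
        ≤ Lp * ‖x₁ - x₂‖ * ‖w₁ - w₂‖ := by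
      rw [← hrev] at *
      exact le_trans (le_abs_self _) hmv
    have hmv3 := mul_le_mul_of_nonneg_left hmv2 hρpos.le
    rw [hrev] at h1
    nlinarith [h1, h2, hq, hmv3]
  -- step 13 : prox Lipschitz
  have hplip : ∀ x₁ y₁ x₂ y₂, ‖prox x₁ y₁ - prox x₂ y₂‖
      ≤ (1/3)*‖x₁-x₂‖ + (4/3)*‖y₁-y₂‖ := by
    intro x₁ y₁ x₂ y₂
    set w₁ := prox x₁ y₁
    set w₂ := prox x₂ y₂
    have hk := hkey x₁ y₁ x₂ y₂
    have hcs : (inner ℝ (w₁ - w₂) (y₁ - y₂) : ℝ) ≤ ‖w₁ - w₂‖ * ‖y₁ - y₂‖ :=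
      real_inner_le_norm _ _
    rcases eq_or_lt_of_le (norm_nonneg (w₁ - w₂)) with h0 | h0
    · rw [← h0]
      positivity
    · have hc : (1 - ρ*Lp) * ‖w₁ - w₂‖ ≤ ρ*Lp*‖x₁-x₂‖ + ‖y₁ - y₂‖ := by
        have hstep : (1 - ρ*Lp) * ‖w₁ - w₂‖ * ‖w₁ - w₂‖
            ≤ (ρ*Lp*‖x₁-x₂‖ + ‖y₁ - y₂‖) * ‖w₁ - w₂‖ := by
          nlinarith [hk, hcs]
        exact le_of_mul_le_mul_right hstep h0
      have t1 : ρ*Lp*‖x₁-x₂‖ ≤ (1/4)*‖x₁-x₂‖ :=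
        mul_le_mul_of_nonneg_right hρLp (norm_nonneg _)
      have t2 : (3/4)*‖w₁ - w₂‖ ≤ (1 - ρ*Lp)*‖w₁ - w₂‖ :=
        mul_le_mul_of_nonneg_right hμ0 (norm_nonneg _)
      linarith
  -- step 14 : the derivative of the envelope
  have hmain : ∀ x y, HasFDerivAt (Function.uncurry env) (DK (prox x y) (x, y)) (x, y) := by
    intro x y
    set w₀ := prox x y with hw₀
    set C : ℝ := (Lp + ρ⁻¹) * (5/3) with hC
    have hC0 : 0 ≤ C := by
      have h1 : 0 ≤ Lp + ρ⁻¹ := add_nonneg hLp0 (inv_nonneg.2 hρpos.le)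
      rw [hC]; positivity
    set r : EuclideanSpace ℝ (Fin dx) × EuclideanSpace ℝ (Fin dy) → ℝ :=
      fun p => env p.1 p.2 - K w₀ p with hr
    have hr0 : r (x, y) = 0 := by
      have : env x y = K w₀ (x, y) := henvK x y
      simp only [hr]
      rw [this]
      simp
    have hrub : ∀ p, r p ≤ 0 := by
      intro p
      have := henvle p.1 p.2 w₀ (hprox x y).1
      simp only [hr]
      apply sub_nonpos.2
      convert this using 2
    have hrlb : ∀ p, -(C * ‖p - ((x, y) : _ × _)‖^2) ≤ r p := by
      intro p
      have heq : r p = K (prox p.1 p.2) p - K w₀ p := by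
        simp only [hr]
        rw [henvK p.1 p.2]
      have hsecond : 0 ≤ K (prox p.1 p.2) ((x, y) : _ × _) - K w₀ ((x, y) : _ × _) := by
        have h1 := henvle x y (prox p.1 p.2) (hprox p.1 p.2).1
        have h2 := henvK x y
        linarith
      have hfirst := hKMV (prox p.1 p.2) w₀ p ((x, y) : _ × _)
      rw [Real.norm_eq_abs, abs_le] at hfirst
      have hwp : ‖prox p.1 p.2 - w₀‖ ≤ (5/3) * ‖p - ((x, y) : _ × _)‖ := by
        have h3 := hplip p.1 p.2 x y
        have h4 : ‖p.1 - x‖ ≤ ‖p - ((x, y) : _ × _)‖ := by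
          have := norm_fst_le (p - ((x, y) : _ × _))
          simpa using this
        have h5 : ‖p.2 - y‖ ≤ ‖p - ((x, y) : _ × _)‖ := by
          have := norm_snd_le (p - ((x, y) : _ × _))
          simpa using this
        calc ‖prox p.1 p.2 - w₀‖ ≤ (1/3)*‖p.1 - x‖ + (4/3)*‖p.2 - y‖ := h3
          _ ≤ (5/3) * ‖p - ((x, y) : _ × _)‖ := by linarith
      have hb : ((Lp + ρ⁻¹) * ‖prox p.1 p.2 - w₀‖) * ‖p - ((x, y) : _ × _)‖
          ≤ C * ‖p - ((x, y) : _ × _)‖^2 := by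
        have h6 : 0 ≤ Lp + ρ⁻¹ := add_nonneg hLp0 (inv_nonneg.2 hρpos.le)
        have h7 : (Lp + ρ⁻¹) * ‖prox p.1 p.2 - w₀‖ ≤ (Lp + ρ⁻¹) * ((5/3) * ‖p - ((x, y) : _ × _)‖) :=
          mul_le_mul_of_nonneg_left hwp h6
        have h8 := mul_le_mul_of_nonneg_right h7 (norm_nonneg (p - ((x, y) : _ × _)))
        calc ((Lp + ρ⁻¹) * ‖prox p.1 p.2 - w₀‖) * ‖p - ((x, y) : _ × _)‖
            ≤ ((Lp + ρ⁻¹) * ((5/3) * ‖p - ((x, y) : _ × _)‖)) * ‖p - ((x, y) : _ × _)‖ := h8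
          _ = C * ‖p - ((x, y) : _ × _)‖^2 := by rw [hC]; ring
      rw [heq]
      calc -(C * ‖p - ((x, y) : _ × _)‖^2)
          ≤ -(((Lp + ρ⁻¹) * ‖prox p.1 p.2 - w₀‖) * ‖p - ((x, y) : _ × _)‖) := neg_le_neg hb
        _ ≤ (K (prox p.1 p.2) p - K w₀ p)
            - (K (prox p.1 p.2) ((x, y) : _ × _) - K w₀ ((x, y) : _ × _)) := hfirst.1
        _ ≤ K (prox p.1 p.2) p - K w₀ p := sub_le_self _ hsecond
    have hrd : HasFDerivAt r (0 : EuclideanSpace ℝ (Fin dx) × EuclideanSpace ℝ (Fin dy) →L[ℝ] ℝ)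
        ((x, y) : _ × _) := by
      rw [hasFDerivAt_iff_isLittleO_nhds_zero]
      rw [Asymptotics.isLittleO_iff]
      intro ε hε
      have hball := Metric.closedBall_mem_nhds (0 : EuclideanSpace ℝ (Fin dx) ×
        EuclideanSpace ℝ (Fin dy)) (show (0:ℝ) < ε/(C+1) by positivity)
      filter_upwards [hball] with h hh
      rw [Metric.mem_closedBall, dist_zero_right] at hh
      have h1 : ‖r ((x, y) + h)‖ ≤ C * ‖h‖^2 := by
        rw [Real.norm_eq_abs, abs_le]
        have h2 := hrlb ((x, y) + h)
        have h3 := hrub ((x, y) + h)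
        have he : ((x, y) : _ × _) + h - (x, y) = h := by abel
        rw [he] at h2
        constructor
        · linarith
        · have : 0 ≤ C * ‖h‖^2 := by positivity
          linarith
      simp only [hr0, sub_zero, ContinuousLinearMap.zero_apply, sub_zero]
      calc ‖r ((x, y) + h)‖ ≤ C * ‖h‖^2 := h1
        _ = (C * ‖h‖) * ‖h‖ := by ring
        _ ≤ ((C+1) * (ε/(C+1))) * ‖h‖ := by
            have : C * ‖h‖ ≤ (C+1) * (ε/(C+1)) := by
              calc C * ‖h‖ ≤ (C+1) * ‖h‖ := by nlinarith [norm_nonneg h]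
                _ ≤ (C+1) * (ε/(C+1)) := by
                    apply mul_le_mul_of_nonneg_left hh (by linarith)
            apply mul_le_mul_of_nonneg_right this (norm_nonneg h)
        _ = ε * ‖h‖ := by
            field_simp
    have hsum := (hK w₀ ((x, y) : _ × _)).add hrd
    rw [add_zero] at hsum
    have hfe : (Function.uncurry env) = fun p => K w₀ p + r p := by
      funext p
      simp only [hr, Function.uncurry]
      ring
    rw [hfe]
    exact hsum
  -- step 15 : Lipschitz bound for the derivative
  have hlip : ∀ x₁ y₁ x₂ y₂, ‖DK (prox x₁ y₁) (x₁, y₁) - DK (prox x₂ y₂) (x₂, y₂)‖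
      ≤ (2/ρ) * ‖((x₁, y₁) : EuclideanSpace ℝ (Fin dx) × EuclideanSpace ℝ (Fin dy)) - (x₂, y₂)‖ := by
    intro x₁ y₁ x₂ y₂
    set w₁ := prox x₁ y₁ with hw₁
    set w₂ := prox x₂ y₂ with hw₂
    set m := ‖((x₁, y₁) : EuclideanSpace ℝ (Fin dx) × EuclideanSpace ℝ (Fin dy)) - (x₂, y₂)‖
      with hm
    have hm0 : 0 ≤ m := norm_nonneg _
    have hmx : ‖x₁ - x₂‖ ≤ m := by
      have := norm_fst_le (((x₁, y₁) : EuclideanSpace ℝ (Fin dx) ×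
        EuclideanSpace ℝ (Fin dy)) - (x₂, y₂))
      exact this
    have hmy : ‖y₁ - y₂‖ ≤ m := by
      have := norm_snd_le (((x₁, y₁) : EuclideanSpace ℝ (Fin dx) ×
        EuclideanSpace ℝ (Fin dy)) - (x₂, y₂))
      exact this
    have hwb : ‖w₁ - w₂‖ ≤ (5/3)*m := le_trans (hplip x₁ y₁ x₂ y₂) (by linarith)
    have ha0 : (0:ℝ) < ρ⁻¹ := inv_pos.2 hρpos
    have hLpa : Lp ≤ ρ⁻¹/4 := by
      have h1 := mul_le_mul_of_nonneg_left hρLp ha0.le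
      rw [← mul_assoc, inv_mul_cancel₀ (ne_of_gt hρpos), one_mul] at h1
      linarith
    -- bound on the x-part
    have hΔa : ‖Gx x₁ w₁ - Gx x₂ w₂‖ ≤ (5/12) * ρ⁻¹ * m := by
      have h1 := hGxLip x₁ w₁ x₂ w₂
      have h2 : ‖((x₁, w₁) : EuclideanSpace ℝ (Fin dx) × EuclideanSpace ℝ (Fin dy)) - (x₂, w₂)‖
          ≤ (5/3)*m := by
        rw [Prod.mk_sub_mk, Prod.norm_def]
        apply max_le
        · simp only []
          linarith
        · simp only []
          exact hwb
      calc ‖Gx x₁ w₁ - Gx x₂ w₂‖ ≤ Lp * ‖((x₁, w₁) : _ × _) - (x₂, w₂)‖ := h1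
        _ ≤ (ρ⁻¹/4) * ((5/3)*m) := by
            apply mul_le_mul hLpa h2 (norm_nonneg _) (by positivity)
        _ = (5/12) * ρ⁻¹ * m := by ring
    -- bound on the y-part
    have hΔbeq : ρ⁻¹ • (y₁ - w₁) - ρ⁻¹ • (y₂ - w₂) = ρ⁻¹ • ((y₁ - y₂) - (w₁ - w₂)) := by
      rw [← smul_sub]
      congr 1
      abel
    set s := ‖(y₁ - y₂) - (w₁ - w₂)‖ with hs
    have hs2 : s^2 ≤ (11/6) * m^2 := by
      have hexp : s^2 = ‖y₁ - y₂‖^2 - 2 * (inner ℝ (y₁ - y₂) (w₁ - w₂) : ℝ) + ‖w₁ - w₂‖^2 := by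
        rw [hs]
        exact norm_sub_sq_real _ _
      have hcomm : (inner ℝ (y₁ - y₂) (w₁ - w₂) : ℝ) = (inner ℝ (w₁ - w₂) (y₁ - y₂) : ℝ) :=
        real_inner_comm _ _
      have hk := hkey x₁ y₁ x₂ y₂
      have hby : ‖y₁ - y₂‖^2 ≤ m^2 := by nlinarith [norm_nonneg (y₁ - y₂)]
      have hprod : ‖x₁ - x₂‖ * ‖w₁ - w₂‖ ≤ m * ((5/3)*m) :=
        mul_le_mul hmx hwb (norm_nonneg _) hm0
      nlinarith [sq_nonneg ‖w₁ - w₂‖, hρLp, hρLp0, hk, hby, hprod,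
        mul_le_mul_of_nonneg_right hρLp (mul_nonneg (norm_nonneg (x₁ - x₂)) (norm_nonneg (w₁ - w₂)))]
    have hsle : s ≤ (19/12) * m := by
      have h0 : 0 ≤ s := norm_nonneg _
      nlinarith [hs2, sq_nonneg m, sq_nonneg (s - (19/12)*m), sq_nonneg (s + (19/12)*m)]
    -- assemble
    have hfinal : ‖DK w₁ ((x₁, y₁) : _ × _) - DK w₂ ((x₂, y₂) : _ × _)‖
        ≤ ‖Gx x₁ w₁ - Gx x₂ w₂‖ + ‖ρ⁻¹ • (y₁ - w₁) - ρ⁻¹ • (y₂ - w₂)‖ := by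
      rw [hDKdef]
      simp only []
      rw [auxDiffSum]
      exact auxNormSum _ _
    have hΔb : ‖ρ⁻¹ • (y₁ - w₁) - ρ⁻¹ • (y₂ - w₂)‖ ≤ ρ⁻¹ * ((19/12) * m) := by
      rw [hΔbeq, norm_smul, Real.norm_eq_abs, abs_of_nonneg ha0.le]
      exact mul_le_mul_of_nonneg_left hsle ha0.le
    have h2ρ : (2/ρ) * m = 2 * ρ⁻¹ * m := by
      rw [div_eq_mul_inv]
    calc ‖DK w₁ ((x₁, y₁) : _ × _) - DK w₂ ((x₂, y₂) : _ × _)‖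
        ≤ ‖Gx x₁ w₁ - Gx x₂ w₂‖ + ‖ρ⁻¹ • (y₁ - w₁) - ρ⁻¹ • (y₂ - w₂)‖ := hfinal
      _ ≤ (5/12) * ρ⁻¹ * m + ρ⁻¹ * ((19/12) * m) := add_le_add hΔa hΔb
      _ = 2 * ρ⁻¹ * m := by ring
      _ = (2/ρ) * m := h2ρ.symm
  refine ⟨fun x y => DK (prox x y) (x, y), ?_, ?_⟩
  · intro x hx y
    exact ⟨hmain x y, rfl⟩
  · intro x₁ _ x₂ _ y₁ y₂
    exact hlip x₁ y₁ x₂ y₂
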